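/- arXiv:2504.04267 — 5 statements merged into one kernel-verified Lean document; each statement's English description precedes it below -/
import Mathlib

section
/- For all real p in [0,1], the binary entropy satisfies ln(2)·log₂(p)·log₂(1−p) ≤ H_b(p) ≤ log₂(p)·log₂(1−p), where H_b(p) = p·log₂(1/p) + (1−p)·log₂(1/(1−p)). -/
open intervalIntegral

lemma cont_const_rpow {x : ℝ} (hx : 0 < x) : Continuous fun s : ℝ => x ^ s :=
  continuous_iff_continuousAt.2 fun _ => Real.continuousAt_const_rpow hx.ne'

lemma integral_const_rpow {x : ℝ} (hx : 0 < x) (hx1 : x ≠ 1) :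
    ∫ s in (0:ℝ)..1, x ^ s = (x - 1) / Real.log x := by
  have hlog : Real.log x ≠ 0 := by
    simp [Real.log_eq_zero]
    push_neg
    exact ⟨hx.ne', hx1, by linarith⟩
  have h : ∀ s ∈ Set.uIcc (0:ℝ) 1,
      HasDerivAt (fun s => x ^ s / Real.log x) (x ^ s) s := by
    intro s _
    have h2 := ((Real.hasStrictDerivAt_const_rpow hx s).hasDerivAt).div_const (Real.log x)
    simpa [mul_div_assoc, mul_div_cancel_right₀ _ hlog] using h2
  rw [intervalIntegral.integral_eq_sub_of_hasDerivAt h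
    ((cont_const_rpow hx).intervalIntegrable _ _)]
  rw [Real.rpow_one, Real.rpow_zero]
  ring

lemma g_bounds {p : ℝ} (hp0 : 0 < p) (hp1 : p < 1) :
    1 ≤ (1 - p) / (-Real.log p) + p / (-Real.log (1 - p)) ∧
    (1 - p) / (-Real.log p) + p / (-Real.log (1 - p)) ≤ 1 / Real.log 2 := by
  have hq0 : 0 < 1 - p := by linarith
  have hcp := cont_const_rpow hp0
  have hcq := cont_const_rpow hq0
  have hInt : ∫ s in (0:ℝ)..1, (p ^ s + (1 - p) ^ s) =
      (1 - p) / (-Real.log p) + p / (-Real.log (1 - p)) := by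
    rw [intervalIntegral.integral_add (hcp.intervalIntegrable _ _) (hcq.intervalIntegrable _ _),
      integral_const_rpow hp0 hp1.ne, integral_const_rpow hq0 (by linarith)]
    rw [div_neg, div_neg]
    ring_nf
  constructor
  · rw [← hInt]
    have hm : ∫ _s in (0:ℝ)..1, (1:ℝ) ≤ ∫ s in (0:ℝ)..1, (p ^ s + (1 - p) ^ s) := by
      apply intervalIntegral.integral_mono_on zero_le_one
        (intervalIntegrable_const)
        ((hcp.add hcq).intervalIntegrable _ _)
      intro s hs
      have e1 : p ^ (1:ℝ) ≤ p ^ s := Real.rpow_le_rpow_of_exponent_ge hp0 hp1.le hs.2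
      have e2 : (1-p) ^ (1:ℝ) ≤ (1-p) ^ s := Real.rpow_le_rpow_of_exponent_ge hq0 (by linarith) hs.2
      rw [Real.rpow_one] at e1 e2
      simp only [Pi.add_apply]
      linarith
    simpa using hm
  · rw [← hInt]
    have hc2 : Continuous fun s : ℝ => (2:ℝ) ^ (1 - s) := by
      exact (cont_const_rpow two_pos).comp (continuous_const.sub continuous_id)
    have h2 : ∫ s in (0:ℝ)..1, (2:ℝ) ^ (1 - s) = 1 / Real.log 2 := by
      rw [intervalIntegral.integral_comp_sub_left (fun u => (2:ℝ) ^ u) 1]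
      norm_num
      rw [integral_const_rpow two_pos (by norm_num)]
      norm_num
    rw [← h2]
    apply intervalIntegral.integral_mono_on zero_le_one
      ((hcp.add hcq).intervalIntegrable _ _)
      (hc2.intervalIntegrable _ _)
    intro s hs
    have hcc := (Real.concaveOn_rpow hs.1 hs.2).2 (Set.mem_Ici.2 hp0.le)
      (Set.mem_Ici.2 hq0.le) (by norm_num : (0:ℝ) ≤ 1/2) (by norm_num : (0:ℝ) ≤ 1/2) (by norm_num)
    simp only [smul_eq_mul] at hcc
    have e3 : (1/2 : ℝ) * p + 1/2 * (1 - p) = 1/2 := by ring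
    rw [e3] at hcc
    have e4 : ((1:ℝ)/2) ^ s = 2 ^ (-s) := by
      rw [one_div, Real.rpow_neg (by norm_num), Real.inv_rpow (by norm_num)]
    have e5 : (2:ℝ) ^ (1 - s) = 2 * 2 ^ (-s) := by
      rw [sub_eq_add_neg, Real.rpow_add two_pos, Real.rpow_one]
    rw [e4] at hcc
    rw [e5]
    simp only [Pi.add_apply]
    linarith

noncomputable def binEntropy (p : ℝ) : ℝ :=
  p * Real.logb 2 (1 / p) + (1 - p) * Real.logb 2 (1 / (1 - p))

theorem topsoe_binary_entropy_bounds :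
    ∀ p ∈ Set.Icc (0 : ℝ) 1,
      Real.log 2 * (Real.logb 2 p * Real.logb 2 (1 - p)) ≤ binEntropy p ∧
      binEntropy p ≤ Real.logb 2 p * Real.logb 2 (1 - p) := by
  intro p hp
  rcases eq_or_lt_of_le hp.1 with h0 | h0
  · simp [binEntropy, ← h0]
  rcases eq_or_lt_of_le hp.2 with h1 | h1
  · simp [binEntropy, h1]
  -- now 0 < p < 1
  have hq0 : 0 < 1 - p := by linarith
  have hA : 0 < -Real.log p := by have := Real.log_neg h0 h1; linarith
  have hB : 0 < -Real.log (1 - p) := by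
    have := Real.log_neg hq0 (by linarith); linarith
  have hl : 0 < Real.log 2 := Real.log_pos (by norm_num)
  obtain ⟨hg1, hg2⟩ := g_bounds h0 h1
  set A := -Real.log p with hAdef
  set B := -Real.log (1 - p) with hBdef
  set l := Real.log 2 with hldef
  have hEnt : binEntropy p = (p * A + (1 - p) * B) / l := by
    unfold binEntropy
    rw [Real.logb, Real.logb, one_div, one_div, Real.log_inv, Real.log_inv]
    field_simp
    ring
  have hProd : Real.logb 2 p * Real.logb 2 (1 - p) = A * B / (l * l) := by
    rw [Real.logb, Real.logb]
    field_simp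
    ring
  have key1 : A * B ≤ p * A + (1 - p) * B := by
    have hm : A * B * 1 ≤ A * B * ((1 - p) / A + p / B) :=
      mul_le_mul_of_nonneg_left hg1 (by positivity)
    have he : A * B * ((1 - p) / A + p / B) = p * A + (1 - p) * B := by
      field_simp
      ring
    rw [he] at hm; linarith [hm]
  have key2 : l * (p * A + (1 - p) * B) ≤ A * B := by
    have hm : l * A * B * ((1 - p) / A + p / B) ≤ l * A * B * (1 / l) :=
      mul_le_mul_of_nonneg_left hg2 (by positivity)
    have he1 : l * A * B * ((1 - p) / A + p / B) = l * (p * A + (1 - p) * B) := by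
      field_simp
      ring
    have he2 : l * A * B * (1 / l) = A * B := by
      field_simp
    rw [he1, he2] at hm; exact hm
  constructor
  · rw [hEnt, hProd]
    have e : l * (A * B / (l * l)) = A * B / l := by
      field_simp
    rw [e, div_le_div_iff₀ hl hl]
    nlinarith [key1, hl.le]
  · rw [hEnt, hProd]
    rw [div_le_div_iff₀ hl (by positivity)]
    nlinarith [mul_le_mul_of_nonneg_right key2 hl.le]
end

section
/- For all real x > 0, (1 + 2^x)·log₂(1 + 2^{-x}) < 2, and the function x ↦ (1 + 2^x)·log₂(1 + 2^{-x}) is strictly decreasing on (0, ∞) with value 2 at x = 0. -/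
private noncomputable def aldrG (t : ℝ) : ℝ := (1 + t) * Real.log (1 + t) / t

private lemma aldrG_hasDeriv {t : ℝ} (ht : 0 < t) :
    HasDerivAt aldrG ((t - Real.log (1 + t)) / t ^ 2) t := by
  have h1t : (0:ℝ) < 1 + t := by linarith
  have h1 : HasDerivAt (fun t : ℝ => 1 + t) 1 t := by
    simpa using (hasDerivAt_id t).const_add 1
  have h2 : HasDerivAt (fun t : ℝ => Real.log (1 + t)) (1 / (1 + t)) t := by
    exact ((Real.hasDerivAt_log h1t.ne').comp t h1).congr_deriv (by simp)
  have h3 : HasDerivAt (fun t : ℝ => (1 + t) * Real.log (1 + t))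
      (Real.log (1 + t) + 1) t := by
    have := h1.mul h2
    refine this.congr_deriv ?_
    rw [one_mul, mul_one_div_cancel h1t.ne']
  have h4 := h3.div (hasDerivAt_id t) ht.ne'
  refine h4.congr_deriv ?_
  simp only [id]
  ring

private lemma aldrG_mono : StrictMonoOn aldrG (Set.Ioi (0:ℝ)) := by
  apply strictMonoOn_of_deriv_pos (convex_Ioi 0)
  · intro t ht
    have ht : 0 < t := ht
    exact ((aldrG_hasDeriv ht).continuousAt).continuousWithinAt
  · intro t ht
    rw [interior_Ioi] at ht
    have ht : (0:ℝ) < t := ht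
    rw [(aldrG_hasDeriv ht).deriv]
    have hlog : Real.log (1 + t) < t := by
      have := Real.log_lt_sub_one_of_pos (by linarith : (0:ℝ) < 1 + t) (by linarith)
      linarith
    apply div_pos (by linarith)
    positivity

private lemma aldr_key (x : ℝ) :
    (1 + (2 : ℝ) ^ x) * Real.logb 2 (1 + (2 : ℝ) ^ (-x)) = aldrG ((2:ℝ) ^ (-x)) / Real.log 2 := by
  have h2x : (0:ℝ) < (2:ℝ) ^ x := Real.rpow_pos_of_pos two_pos x
  have hneg : (2:ℝ) ^ (-x) = ((2:ℝ) ^ x)⁻¹ := Real.rpow_neg (by norm_num) x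
  have heq : (1 + (2:ℝ)^x) = (1 + ((2:ℝ)^x)⁻¹) / ((2:ℝ)^x)⁻¹ := by field_simp; ring
  rw [Real.logb, aldrG, hneg, heq]
  ring

theorem aldr_aux_function_bound :
    (∀ x : ℝ, 0 < x → (1 + (2 : ℝ) ^ x) * Real.logb 2 (1 + (2 : ℝ) ^ (-x)) < 2) ∧
    StrictAntiOn (fun x : ℝ => (1 + (2 : ℝ) ^ x) * Real.logb 2 (1 + (2 : ℝ) ^ (-x)))
      (Set.Ioi (0 : ℝ)) ∧
    (1 + (2 : ℝ) ^ (0 : ℝ)) * Real.logb 2 (1 + (2 : ℝ) ^ (-(0 : ℝ))) = 2 := by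
  have hlog2 : (0:ℝ) < Real.log 2 := Real.log_pos (by norm_num)
  have hmem : ∀ x : ℝ, (2:ℝ) ^ (-x) ∈ Set.Ioi (0:ℝ) := fun x =>
    Real.rpow_pos_of_pos two_pos (-x)
  have hlt : ∀ a b : ℝ, a < b → (2:ℝ) ^ (-b) < (2:ℝ) ^ (-a) := by
    intro a b hab
    exact Real.rpow_lt_rpow_left_iff (by norm_num : (1:ℝ) < 2) |>.2 (by linarith)
  have hG1 : aldrG 1 = 2 * Real.log 2 := by
    norm_num [aldrG]
  refine ⟨?_, ?_, ?_⟩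
  · intro x hx
    rw [aldr_key]
    have h1 : (2:ℝ) ^ (-x) < 1 := by
      have := hlt 0 x hx
      simpa using this
    have := aldrG_mono (hmem x) (Set.mem_Ioi.2 one_pos) h1
    rw [hG1] at this
    rw [div_lt_iff₀ hlog2]
    linarith
  · intro a ha b hb hab
    simp only [aldr_key]
    have := aldrG_mono (hmem b) (hmem a) (hlt a b hab)
    gcongr
  · norm_num [Real.logb_self_eq_one]
end

section
/- For each integer k ≥ 2, let m = 2^{k−1} + 1 and P_k = ((2^{k−1}−1)/m, 2/m). Then the binary entropy H(P_k) = H_b(2/(2^{k−1}+1)) satisfies H(P_k) < (k−1)/2^{k−4}. -/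
theorem entropy_Pk_bound (k : ℕ) (hk : 2 ≤ k) :
    binEntropy (2 / ((2 : ℝ) ^ ((k : ℤ) - 1) + 1))
      < ((k : ℝ) - 1) / (2 : ℝ) ^ ((k : ℤ) - 4) := by
  have hk2 : (2 : ℝ) ≤ (k : ℝ) := by exact_mod_cast hk
  set y : ℝ := (2 : ℝ) ^ ((k : ℤ) - 1) with hy
  have hk1 : (1 : ℤ) ≤ (k : ℤ) - 1 := by omega
  have hy2 : (2 : ℝ) ≤ y := by
    calc (2 : ℝ) = 2 ^ (1 : ℤ) := by norm_num
    _ ≤ y := zpow_le_zpow_right₀ (by norm_num) hk1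
  have hy0 : (0 : ℝ) < y := by linarith
  set p : ℝ := 2 / (y + 1) with hpdef
  have hp0 : 0 < p := by positivity
  have hp1 : p < 1 := by
    rw [hpdef, div_lt_one (by linarith)]; linarith
  have hq0 : 0 < 1 - p := by linarith
  -- rewrite RHS
  have hRHS : ((k : ℝ) - 1) / (2 : ℝ) ^ ((k : ℤ) - 4) = 8 * ((k : ℝ) - 1) / y := by
    have h1 : (2 : ℝ) ^ ((k : ℤ) - 4) = y / 8 := by
      have : (k : ℤ) - 4 = ((k : ℤ) - 1) + (-3) := by ring
      rw [this, zpow_add₀ (by norm_num : (2 : ℝ) ≠ 0), hy]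
      norm_num; ring
    rw [h1]
    field_simp
  -- bound on first term
  have hlog1 : Real.logb 2 (1 / p) ≤ (k : ℝ) - 1 := by
    have h1p : 1 / p = (y + 1) / 2 := by
      rw [hpdef]; field_simp
    have hle : (y + 1) / 2 ≤ y := by linarith
    have hmono : Real.logb 2 ((y + 1) / 2) ≤ Real.logb 2 y :=
      Real.logb_le_logb_of_le one_lt_two (by positivity) hle
    have hlogy : Real.logb 2 y = (k : ℝ) - 1 := by
      rw [hy, Real.logb, Real.log_zpow, mul_div_assoc,
        div_self (Real.log_pos one_lt_two).ne']
      push_cast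
      ring
    rw [h1p]
    linarith [hmono, hlogy.le]
  -- bound on second term
  have hlog2 : (1 - p) * Real.logb 2 (1 / (1 - p)) ≤ 2 * p := by
    have hlog_le : Real.log (1 / (1 - p)) ≤ p / (1 - p) := by
      have := Real.log_le_sub_one_of_pos (show (0 : ℝ) < 1 / (1 - p) by positivity)
      have h : 1 / (1 - p) - 1 = p / (1 - p) := by field_simp; ring
      linarith [h ▸ this]
    have hlog2pos : (0 : ℝ) < Real.log 2 := Real.log_pos (by norm_num)
    have hl2 : (1 : ℝ) / 2 ≤ Real.log 2 := by
      have := Real.log_two_gt_d9; linarith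
    have h1 : (1 - p) * Real.logb 2 (1 / (1 - p))
        = ((1 - p) * Real.log (1 / (1 - p))) / Real.log 2 := by
      rw [Real.logb]; ring
    have h2 : (1 - p) * Real.log (1 / (1 - p)) ≤ p := by
      have := mul_le_mul_of_nonneg_left hlog_le hq0.le
      have heq : (1 - p) * (p / (1 - p)) = p := by field_simp
      linarith [heq ▸ this]
    rw [h1]
    rw [div_le_iff₀ hlog2pos]
    nlinarith
  -- combine
  have hH : binEntropy p ≤ p * ((k : ℝ) - 1) + 2 * p := by
    unfold binEntropy
    have t1 : p * Real.logb 2 (1 / p) ≤ p * ((k : ℝ) - 1) :=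
      mul_le_mul_of_nonneg_left hlog1 hp0.le
    linarith
  rw [hRHS]
  have hfin : p * ((k : ℝ) - 1) + 2 * p < 8 * ((k : ℝ) - 1) / y := by
    have heq : p * ((k : ℝ) - 1) + 2 * p = 2 * ((k : ℝ) + 1) / (y + 1) := by
      rw [hpdef]; ring
    rw [heq, div_lt_div_iff₀ (by linarith) hy0]
    nlinarith
  linarith
end

section
/- Let m be a positive integer with 2^{k−1} < m ≤ 2^k and let K ≥ k. Then the ALDR rejection probability q_{K,0} = (2^K − m·⌊2^K/m⌋)/2^K satisfies q_{K,0} < 1/(2^{K−k} + 1). -/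
theorem aldr_rejection_probability_bound (m k K : ℕ) (hm : 0 < m)
    (hlow : 2 ^ (k - 1) < m) (hhigh : m ≤ 2 ^ k) (hK : k ≤ K) :
    (((2 ^ K - m * (2 ^ K / m) : ℕ) : ℝ)) / 2 ^ K < 1 / ((2 : ℝ) ^ (K - k) + 1) := by
  have hq : 2 ^ (K - k) ≤ 2 ^ K / m := by
    rw [Nat.le_div_iff_mul_le hm]
    calc 2 ^ (K - k) * m ≤ 2 ^ (K - k) * 2 ^ k := Nat.mul_le_mul_left _ hhigh
      _ = 2 ^ K := by rw [← pow_add]; congr 1; omega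
  have hr : 2 ^ K % m < m := Nat.mod_lt _ hm
  have hdm : m * (2 ^ K / m) + 2 ^ K % m = 2 ^ K := Nat.div_add_mod _ _
  have hpos : 0 < 2 ^ (K - k) := Nat.pow_pos (by norm_num)
  have hprod : (2 ^ K % m) * 2 ^ (K - k) < m * (2 ^ K / m) :=
    calc (2 ^ K % m) * 2 ^ (K - k) < m * 2 ^ (K - k) :=
          Nat.mul_lt_mul_of_lt_of_le hr (le_refl _) hpos
      _ ≤ m * (2 ^ K / m) := Nat.mul_le_mul_left _ hq
  have key : (2 ^ K % m) * (2 ^ (K - k) + 1) < 2 ^ K := by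
    have : (2 ^ K % m) * (2 ^ (K - k) + 1) = (2 ^ K % m) * 2 ^ (K - k) + 2 ^ K % m := by ring
    omega
  have heq : 2 ^ K - m * (2 ^ K / m) = 2 ^ K % m := by omega
  rw [heq, div_lt_div_iff₀ (by positivity) (by positivity)]
  have h2 : ((2 ^ K % m : ℕ) : ℝ) * ((2 : ℝ) ^ (K - k) + 1) < 1 * (2 : ℝ) ^ K := by
    rw [one_mul]
    exact_mod_cast key
  exact h2
end

section
/- Suppose m is a positive integer, k = ⌈log₂ m⌉, and K ≥ k + log₂(m/(2^k − m)) (with m < 2^k). Then ⌊2^K/m⌋ > 2^{K−k}; conversely if K < k + log₂(m/(2^k−m)) then ⌊2^K/m⌋ = 2^{K−k}. In particular, for m ≠ 2^k, ⌊2^K/m⌋ > 2^{K−k} holds for all K ≥ 2k. -/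
theorem aldr_min_depth (m k K : ℕ)
    (hlow : 2 ^ (k - 1) < m) (hhigh : m < 2 ^ k) (hK : k ≤ K) :
    (((k : ℝ) + Real.logb 2 ((m : ℝ) / ((2 : ℝ) ^ k - m)) ≤ (K : ℝ)) →
        2 ^ (K - k) < 2 ^ K / m) ∧
    (((K : ℝ) < (k : ℝ) + Real.logb 2 ((m : ℝ) / ((2 : ℝ) ^ k - m))) →
        2 ^ K / m = 2 ^ (K - k)) ∧
    (2 * k ≤ K → 2 ^ (K - k) < 2 ^ K / m) := by
  have hm : 0 < m := lt_trans (pow_pos two_pos _) hlow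
  set d : ℕ := 2 ^ k - m with hd_def
  have hdpos : 0 < d := by omega
  have hsum : m + d = 2 ^ k := by omega
  have hK2 : 2 ^ K = 2 ^ k * 2 ^ (K - k) := by
    rw [← pow_add]; congr 1; omega
  have hdr : ((2 : ℝ) ^ k - (m : ℝ)) = (d : ℝ) := by
    rw [hd_def, Nat.cast_sub hhigh.le]; push_cast; ring
  have hdposR : (0 : ℝ) < (d : ℝ) := by exact_mod_cast hdpos
  have hmposR : (0 : ℝ) < (m : ℝ) := by exact_mod_cast hm
  -- real condition iff nat inequality
  have hiff : ((k : ℝ) + Real.logb 2 ((m : ℝ) / ((2 : ℝ) ^ k - m)) ≤ (K : ℝ)) ↔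
      m ≤ d * 2 ^ (K - k) := by
    rw [hdr, ← sub_nonneg, show (K : ℝ) - ((k : ℝ) + Real.logb 2 ((m : ℝ) / d))
        = ((K : ℝ) - k) - Real.logb 2 ((m : ℝ) / d) by ring, sub_nonneg]
    rw [Real.logb_le_iff_le_rpow one_lt_two (div_pos hmposR hdposR)]
    rw [show (K : ℝ) - (k : ℝ) = ((K - k : ℕ) : ℝ) by
      rw [Nat.cast_sub hK]]
    rw [Real.rpow_natCast, div_le_iff₀ hdposR]
    rw [mul_comm]
    constructor
    · intro h
      exact_mod_cast h
    · intro h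
      exact_mod_cast h
  have hmul : 2 ^ K = m * 2 ^ (K - k) + d * 2 ^ (K - k) := by
    rw [hK2, ← hsum]; ring
  have hlower : 2 ^ (K - k) ≤ 2 ^ K / m := by
    rw [Nat.le_div_iff_mul_le hm]
    nlinarith [pow_pos (show (0:ℕ) < 2 by norm_num) (K - k)]
  refine ⟨?_, ?_, ?_⟩
  · intro hC
    rw [hiff] at hC
    have : (2 ^ (K - k) + 1) * m ≤ 2 ^ K := by nlinarith
    have := (Nat.le_div_iff_mul_le hm).mpr this
    omega
  · intro hC
    have hC' : ¬ (m ≤ d * 2 ^ (K - k)) := by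
      rw [← hiff]; exact not_le.mpr hC
    push_neg at hC'
    have hupper : 2 ^ K / m < 2 ^ (K - k) + 1 := by
      rw [Nat.div_lt_iff_lt_mul hm]
      nlinarith
    omega
  · intro h2k
    have hkk : 2 ^ k ≤ 2 ^ (K - k) := Nat.pow_le_pow_right (by norm_num) (by omega)
    have hmd : m ≤ d * 2 ^ (K - k) := by
      calc m ≤ 2 ^ k := hhigh.le
        _ ≤ 2 ^ (K - k) := hkk
        _ ≤ d * 2 ^ (K - k) := Nat.le_mul_of_pos_left _ hdpos
    have : (2 ^ (K - k) + 1) * m ≤ 2 ^ K := by nlinarith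
    have := (Nat.le_div_iff_mul_le hm).mpr this
    omega
end
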